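/- Let μ be a Borel probability measure on ℝⁿ with full support, and let (T_r)_{r∈ℝ} be the flow of the linear ODE z' = Mz where M ∈ ℝⁿˣⁿ has at least one eigenvalue with nonzero real part. Then μ is not invariant under the flow, i.e., there exist r ∈ ℝ and a Borel set A with μ(T_r⁻¹(A)) ≠ μ(A). -/

import Mathlib

open MeasureTheory Filter

/-- A fully supported Borel probability measure on `ℝⁿ` cannot be
invariant under the flow of the linear ODE `z' = M z` when `M` has an eigenvalue
with nonzero real part: some flow map `T_r` moves the measure of some Borel set. -/
theorem stmt5 {n : ℕ} (μ : Measure (Fin n → ℝ)) [IsProbabilityMeasure μ]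
    (hsupp : ∀ U : Set (Fin n → ℝ), IsOpen U → U.Nonempty → μ U ≠ 0)
    (M : Matrix (Fin n) (Fin n) ℝ)
    (heig : ∃ c : ℂ, c ∈ spectrum ℂ (M.map (algebraMap ℝ ℂ)) ∧ c.re ≠ 0)
    (T : ℝ → (Fin n → ℝ) → (Fin n → ℝ))
    (hT0 : ∀ x, T 0 x = x)
    (hTflow : ∀ x, ∀ r : ℝ, HasDerivAt (fun s => T s x) (M.mulVec (T r x)) r) :
    ∃ (r : ℝ) (A : Set (Fin n → ℝ)), MeasurableSet A ∧ μ (T r ⁻¹' A) ≠ μ A := by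
  by_contra hcon
  push_neg at hcon
  obtain ⟨c, hc, hcre⟩ := heig
  rw [spectrum.mem_iff] at hc
  set Mc : Matrix (Fin n) (Fin n) ℂ := M.map (algebraMap ℝ ℂ) with hMc
  have hdet : (algebraMap ℂ (Matrix (Fin n) (Fin n) ℂ) c - Mc).det = 0 := by
    by_contra hd
    exact hc ((Matrix.isUnit_iff_isUnit_det _).2 (isUnit_iff_ne_zero.2 hd))
  obtain ⟨w, hw0, hwM⟩ := Matrix.exists_vecMul_eq_zero_iff.2 hdet
  -- left eigenvector equation: ∑ i, w i * Mc i j = c * w j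
  have hleft : ∀ j, (∑ i, w i * Mc i j) = c * w j := by
    intro j
    have h := congrFun hwM j
    simp only [Matrix.vecMul, dotProduct, Matrix.sub_apply,
      Matrix.algebraMap_matrix_apply, Pi.zero_apply, mul_sub,
      Finset.sum_sub_distrib, mul_ite, mul_zero] at h
    rw [Finset.sum_ite_eq' Finset.univ j (fun i => w i * (algebraMap ℂ ℂ) c)] at h
    simp only [Finset.mem_univ, if_true, Algebra.algebraMap_self, RingHom.id_apply] at h
    have := sub_eq_zero.mp h
    rw [← this, mul_comm]
  -- the linear functional
  set φ : (Fin n → ℝ) → ℂ := fun x => ∑ i, w i * (x i : ℂ) with hφ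
  have hkey : ∀ v : Fin n → ℝ, (∑ i, w i * ((M.mulVec v) i : ℂ)) = c * φ v := by
    intro v
    have : ∀ i, ((M.mulVec v) i : ℂ) = ∑ j, Mc i j * (v j : ℂ) := by
      intro i
      simp only [Matrix.mulVec, dotProduct, hMc, Matrix.map_apply]
      push_cast
      rfl
    simp_rw [this, Finset.mul_sum, ← mul_assoc]
    rw [Finset.sum_comm]
    simp_rw [← Finset.sum_mul, hleft, hφ, Finset.mul_sum, mul_assoc]
  -- derivative of φ along the flow
  have hder : ∀ x r, HasDerivAt (fun s => φ (T s x)) (c * φ (T r x)) r := by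
    intro x r
    have h1 : ∀ i, HasDerivAt (fun s => (T s x) i) ((M.mulVec (T r x)) i) r :=
      hasDerivAt_pi.mp (hTflow x r)
    have h2 : HasDerivAt (fun s => φ (T s x))
        (∑ i, w i * ((M.mulVec (T r x)) i : ℂ)) r := by
      apply HasDerivAt.fun_sum
      intro i _
      exact ((h1 i).ofReal_comp).const_mul (w i)
    rwa [hkey] at h2
  -- exponential solution
  have hφT : ∀ x r, φ (T r x) = Complex.exp (c * r) * φ x := by
    intro x r
    set f : ℝ → ℂ := fun s => Complex.exp (-(c * s)) * φ (T s x) with hf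
    have hfd : ∀ s, HasDerivAt f 0 s := by
      intro s
      have he : HasDerivAt (fun u : ℝ => Complex.exp (-(c * u)))
          (Complex.exp (-(c * s)) * (-c)) s := by
        have : HasDerivAt (fun u : ℝ => -(c * (u : ℂ))) (-c) s := by
          simpa using (((hasDerivAt_id s).ofReal_comp).const_mul c).fun_neg
        simpa using this.cexp
      have := he.fun_mul (hder x s)
      refine this.congr_deriv ?_
      ring
    have hconst : f r = f 0 :=
      is_const_of_deriv_eq_zero (fun s => (hfd s).differentiableAt)
        (fun s => (hfd s).deriv) r 0
    have h0 : f 0 = φ x := by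
      simp [hf, hT0]
    rw [h0] at hconst
    have : Complex.exp (c * r) * f r = Complex.exp (c * r) * φ x := by rw [hconst]
    rwa [hf, ← mul_assoc, ← Complex.exp_add, add_neg_cancel, Complex.exp_zero,
      one_mul] at this
  set a : ℝ := c.re with ha
  -- norm scaling
  have hnorm : ∀ x r, ‖φ (T r x)‖ = Real.exp (a * r) * ‖φ x‖ := by
    intro x r
    rw [hφT, norm_mul, Complex.norm_exp]
    congr 2
    simp [Complex.mul_re, ha]
  set A : ℝ → Set (Fin n → ℝ) := fun t => {x | t < ‖φ x‖} with hA
  have hφcont : Continuous φ := by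
    apply continuous_finset_sum
    intro i _
    exact continuous_const.mul (Complex.continuous_ofReal.comp (continuous_apply i))
  have hAopen : ∀ t, IsOpen (A t) := fun t =>
    isOpen_lt continuous_const (continuous_norm.comp hφcont)
  have hAmeas : ∀ t, MeasurableSet (A t) := fun t => (hAopen t).measurableSet
  -- preimage identity
  have hpre : ∀ r t, T r ⁻¹' A t = A (Real.exp (-(a * r)) * t) := by
    intro r t
    ext x
    simp only [Set.mem_preimage, hA, Set.mem_setOf_eq, hnorm]
    rw [Real.exp_neg]
    constructor
    · intro h
      rw [inv_mul_lt_iff₀ (Real.exp_pos _)]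
      exact h
    · intro h
      rw [inv_mul_lt_iff₀ (Real.exp_pos _)] at h
      exact h
  have hμA : ∀ r t, μ (A (Real.exp (-(a * r)) * t)) = μ (A t) := by
    intro r t
    rw [← hpre]
    exact hcon r (A t) (hAmeas t)
  -- μ (A s) = μ (A t) for positive s, t
  have hconstμ : ∀ s t : ℝ, 0 < s → 0 < t → μ (A s) = μ (A t) := by
    intro s t hs ht
    have := hμA (Real.log (t / s) / a) t
    have hexp : Real.exp (-(a * (Real.log (t / s) / a))) * t = s := by
      rw [mul_div_assoc']
      rw [mul_comm a (Real.log (t/s)), mul_div_assoc, div_self hcre, mul_one]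
      rw [Real.exp_neg, Real.exp_log (by positivity)]
      field_simp
    rw [hexp] at this
    exact this
  -- μ (A 1) = 0
  have h1 : μ (A 1) = 0 := by
    have htend : Tendsto (μ ∘ fun k : ℕ => A k) atTop (nhds (μ (⋂ k : ℕ, A k))) := by
      apply tendsto_measure_iInter_atTop
      · exact fun k => (hAmeas _).nullMeasurableSet
      · intro i j hij
        intro x hx
        simp only [hA, Set.mem_setOf_eq] at hx ⊢
        exact lt_of_le_of_lt (by exact_mod_cast hij) hx
      · exact ⟨0, measure_ne_top μ _⟩
    have hempty : (⋂ k : ℕ, A k) = ∅ := by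
      ext x
      simp only [Set.mem_iInter, hA, Set.mem_setOf_eq, Set.mem_empty_iff_false,
        iff_false, not_forall, not_lt]
      obtain ⟨k, hk⟩ := exists_nat_ge ‖φ x‖
      exact ⟨k, hk⟩
    rw [hempty, measure_empty] at htend
    have heven : (μ ∘ fun k : ℕ => A k) =ᶠ[atTop] fun _ => μ (A 1) := by
      filter_upwards [eventually_ge_atTop 1] with k hk
      exact hconstμ k 1 (by exact_mod_cast Nat.pos_of_ne_zero (by omega)) one_pos
    have hlim : Tendsto (fun _ : ℕ => μ (A 1)) atTop (nhds 0) := htend.congr' heven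
    exact tendsto_nhds_unique tendsto_const_nhds hlim
  -- the set where φ ≠ 0 is null
  have hnull : μ {x | φ x ≠ 0} = 0 := by
    have hsub : {x | φ x ≠ 0} ⊆ ⋃ k : ℕ, A (1 / ((k : ℝ) + 1)) := by
      intro x hx
      have hpos : 0 < ‖φ x‖ := norm_pos_iff.mpr hx
      obtain ⟨k, hk⟩ := exists_nat_one_div_lt hpos
      exact Set.mem_iUnion.2 ⟨k, hk⟩
    refine measure_mono_null hsub (measure_iUnion_null fun k => ?_)
    rw [hconstμ (1 / ((k : ℝ) + 1)) 1 (by positivity) one_pos]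
    exact h1
  -- but it is open and nonempty
  have hopen : IsOpen {x | φ x ≠ 0} := isOpen_compl_singleton.preimage hφcont
  have hne : {x | φ x ≠ 0}.Nonempty := by
    obtain ⟨j, hj⟩ := Function.ne_iff.mp hw0
    refine ⟨Pi.single j 1, ?_⟩
    simp only [Set.mem_setOf_eq, hφ]
    rw [Finset.sum_eq_single j]
    · simpa using hj
    · intro i _ hij
      simp [Pi.single_apply, hij]
    · simp
  exact hsupp _ hopen hne hnull
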